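/- (Proposition 1, top-down bound.) Let P be a probability distribution on an instance space X, let the per-instance loss satisfy 0 ≤ ℓ(θ; x) ≤ 1 for every θ ∈ Θ and P-almost every x, and let D ∼ P^n be an i.i.d. dataset. Let κ : Θ → K be an abstraction map and g : K → Θ a measurable realization map satisfying κ(g(K)) = K for all K ∈ K, and define the distortion δ_P(g, κ) := sup_{θ ∈ Θ} ( L_P(g(κ(θ))) − L_P(θ) ). Assume the population risk attains its infimum L_P* := inf_{θ ∈ Θ} L_P(θ) at some θ* ∈ Θ. Let K̂ be a (possibly randomized) data-dependent knowledge state satisfying K̂ ∈ argmin_{K ∈ K} L̂_D(g(K)), and set θ̂_TD := g(K̂). Then E[ L_P(θ̂_TD) ] − L_P* ≤ δ_P(g, κ) + sqrt( I(K̂; D) / (2n) ). -/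

import Mathlib

open MeasureTheory ProbabilityTheory
open scoped ENNReal

open Classical in
/-- The Kullback–Leibler divergence between two measures, valued in `ℝ≥0∞`:
it is `∫ log (dμ/dν) dμ` when `μ ≪ ν` and the log-likelihood ratio is integrable,
and `∞` otherwise. -/
noncomputable def klDiv {α : Type*} [MeasurableSpace α] (μ ν : Measure α) : ℝ≥0∞ :=
  if μ ≪ ν ∧ Integrable (llr μ ν) μ then ENNReal.ofReal (∫ x, llr μ ν x ∂μ) else ⊤

/-- The mutual information `I(U; V)` between two random variables: the KL divergence
between their joint law and the product of their marginal laws. -/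
noncomputable def mutualInfo {Ω α β : Type*} [MeasurableSpace Ω] [MeasurableSpace α]
    [MeasurableSpace β] (μ : Measure Ω) (U : Ω → α) (V : Ω → β) : ℝ≥0∞ :=
  klDiv (μ.map fun ω => (U ω, V ω)) ((μ.map U).prod (μ.map V))

section AuxTopDown

open Real


lemma hoeffding_core {p : ℝ} (hp0 : 0 ≤ p) (hp1 : p ≤ 1) (h : ℝ) :
    1 - p + p * Real.exp h ≤ Real.exp (p * h + h ^ 2 / 8) := by
  set d : ℝ → ℝ := fun h => 1 - p + p * Real.exp h with hd_def
  have hd : ∀ h, 0 < d h := by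
    intro h
    rcases eq_or_lt_of_le hp0 with h0 | h0
    · simp [hd_def, ← h0]
    · have := Real.exp_pos h
      have : 0 < p * Real.exp h := by positivity
      simp only [hd_def]; nlinarith
  rw [← Real.log_le_iff_le_exp (hd h)]
  set f : ℝ → ℝ := fun h => p * h + h ^ 2 / 8 - Real.log (d h) with hf_def
  set g : ℝ → ℝ := fun h => p + h / 4 - p * Real.exp h / d h with hg_def
  have hfd : ∀ h, HasDerivAt f (g h) h := by
    intro h
    have h1 : HasDerivAt (fun h : ℝ => p * h) p h := by
      simpa using (hasDerivAt_id h).const_mul p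
    have h2 : HasDerivAt (fun h : ℝ => h ^ 2 / 8) (h / 4) h := by
      have := (hasDerivAt_pow 2 h).div_const 8
      refine this.congr_deriv ?_; push_cast; ring
    have h3 : HasDerivAt d (p * Real.exp h) h := by
      have := ((Real.hasDerivAt_exp h).const_mul p).const_add (1 - p)
      simpa [hd_def] using this
    have h4 : HasDerivAt (fun h => Real.log (d h)) (p * Real.exp h / d h) h := by
      have := (Real.hasDerivAt_log (hd h).ne').comp h h3
      simpa [Function.comp_def, div_eq_inv_mul] using this
    simpa [hf_def, hg_def, Pi.add_def, Pi.sub_def] using (h1.add h2).sub h4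
  have hgd : ∀ h, HasDerivAt g
      (1 / 4 - (p * Real.exp h * d h - p * Real.exp h * (p * Real.exp h)) / d h ^ 2) h := by
    intro h
    have h3 : HasDerivAt d (p * Real.exp h) h := by
      have := ((Real.hasDerivAt_exp h).const_mul p).const_add (1 - p)
      simpa [hd_def] using this
    have h5 : HasDerivAt (fun h => p * Real.exp h) (p * Real.exp h) h :=
      (Real.hasDerivAt_exp h).const_mul p
    have h6 : HasDerivAt (fun h => p * Real.exp h / d h)
        ((p * Real.exp h * d h - p * Real.exp h * (p * Real.exp h)) / d h ^ 2) h :=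
      h5.div h3 (hd h).ne'
    have h7 : HasDerivAt (fun h : ℝ => p + h / 4) (1 / 4) h := by
      simpa using ((hasDerivAt_id h).div_const 4).const_add p
    simpa [hg_def, Pi.sub_def] using h7.sub h6
  have hg' : ∀ h, 0 ≤ 1 / 4 - (p * Real.exp h * d h - p * Real.exp h * (p * Real.exp h)) / d h ^ 2 := by
    intro h
    have hdh := hd h
    rw [sub_nonneg, div_le_iff₀ (by positivity)]
    have ha : 0 ≤ 1 - p := by linarith
    have hb : 0 ≤ p * Real.exp h := by positivity
    have : d h = (1 - p) + p * Real.exp h := rfl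
    nlinarith [sq_nonneg ((1 - p) - p * Real.exp h)]
  have hgmono : Monotone g :=
    monotone_of_deriv_nonneg (fun h => (hgd h).differentiableAt)
      (fun h => by rw [(hgd h).deriv]; exact hg' h)
  have hg0 : g 0 = 0 := by
    simp [hg_def, hd_def]
  have hf0 : f 0 = 0 := by
    simp [hf_def, hd_def]
  have hfnonneg : 0 ≤ f h := by
    rcases le_or_gt 0 h with hh | hh
    · have hmono : MonotoneOn f (Set.Ici 0) := by
        apply monotoneOn_of_deriv_nonneg (convex_Ici 0)
          (Differentiable.continuous (fun x => (hfd x).differentiableAt)).continuousOn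
          (fun x _ => (hfd x).differentiableAt.differentiableWithinAt)
        intro x hx
        rw [(hfd x).deriv]
        rw [interior_Ici] at hx
        calc (0:ℝ) = g 0 := hg0.symm
          _ ≤ g x := hgmono (le_of_lt hx)
      have := hmono (Set.self_mem_Ici) (Set.mem_Ici.2 hh) hh
      linarith [hf0 ▸ this]
    · have hmono : AntitoneOn f (Set.Iic 0) := by
        apply antitoneOn_of_deriv_nonpos (convex_Iic 0)
          (Differentiable.continuous (fun x => (hfd x).differentiableAt)).continuousOn
          (fun x _ => (hfd x).differentiableAt.differentiableWithinAt)
        intro x hx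
        rw [(hfd x).deriv]
        rw [interior_Iic] at hx
        calc g x ≤ g 0 := hgmono (le_of_lt hx)
          _ = 0 := hg0
      have := hmono (Set.mem_Iic.2 hh.le) (Set.self_mem_Iic) hh.le
      linarith [hf0 ▸ this]
  simp only [hf_def] at hfnonneg
  linarith [hfnonneg]


lemma bdd_integrable' {α : Type*} [MeasurableSpace α] {P : Measure α} [IsFiniteMeasure P]
    {f : α → ℝ} (hf : AEStronglyMeasurable f P) {C : ℝ} (hC : ∀ x, |f x| ≤ C) :
    Integrable f P :=
  Integrable.mono' (integrable_const C) hf (Filter.Eventually.of_forall fun x => by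
    simpa using hC x)

lemma mgf_bound {𝒳 : Type*} [MeasurableSpace 𝒳] (P : Measure 𝒳) [IsProbabilityMeasure P]
    {X : 𝒳 → ℝ} (hX : Measurable X) (hb : ∀ x, X x ∈ Set.Icc (0:ℝ) 1) (t : ℝ) :
    ∫ x, Real.exp (t * ((∫ y, X y ∂P) - X x)) ∂P ≤ Real.exp (t ^ 2 / 8) := by
  set m : ℝ := ∫ y, X y ∂P with hm_def
  have hXint : Integrable X P := bdd_integrable' hX.aestronglyMeasurable
    (C := 1) (fun x => abs_le.2 ⟨by linarith [(hb x).1], (hb x).2⟩)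
  have hm0 : 0 ≤ m := integral_nonneg fun x => (hb x).1
  have hm1 : m ≤ 1 := by
    calc m ≤ ∫ _, (1:ℝ) ∂P := integral_mono hXint (integrable_const 1) (fun x => (hb x).2)
    _ = 1 := by simp
  have hptwise : ∀ x, Real.exp (t * (m - X x))
      ≤ Real.exp (t * m) * (1 - X x + X x * Real.exp (-t)) := by
    intro x
    have hconv := convexOn_exp.2 (Set.mem_univ (0:ℝ)) (Set.mem_univ (-t))
      (by linarith [(hb x).2] : (0:ℝ) ≤ 1 - X x) (hb x).1 (by ring)
    simp only [smul_eq_mul, mul_zero, zero_add, Real.exp_zero, mul_one] at hconv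
    have heq : Real.exp (t * (m - X x)) = Real.exp (t * m) * Real.exp (X x * -t) := by
      rw [← Real.exp_add]; ring_nf
    rw [heq]
    have h2 : Real.exp (X x * -t) ≤ 1 - X x + X x * Real.exp (-t) := hconv
    have := Real.exp_pos (t * m)
    nlinarith [this.le]
  have hint1 : Integrable (fun x => Real.exp (t * (m - X x))) P := by
    refine bdd_integrable' ((hX.const_sub m).const_mul t).exp.aestronglyMeasurable
      (C := Real.exp |t|) (fun x => ?_)
    rw [abs_of_pos (Real.exp_pos _)]
    apply Real.exp_le_exp.2
    have h1 : |m - X x| ≤ 1 := by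
      rw [abs_le]; constructor <;> [linarith [(hb x).2, hm0]; linarith [(hb x).1, hm1]]
    calc t * (m - X x) ≤ |t * (m - X x)| := le_abs_self _
    _ = |t| * |m - X x| := abs_mul _ _
    _ ≤ |t| * 1 := mul_le_mul_of_nonneg_left h1 (abs_nonneg t)
    _ = |t| := mul_one _
  have hint2 : Integrable (fun x => Real.exp (t * m) * (1 - X x + X x * Real.exp (-t))) P := by
    exact (((integrable_const (1:ℝ)).sub hXint).add (hXint.mul_const _)).const_mul _
  calc ∫ x, Real.exp (t * (m - X x)) ∂P
      ≤ ∫ x, Real.exp (t * m) * (1 - X x + X x * Real.exp (-t)) ∂P :=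
        integral_mono hint1 hint2 hptwise
    _ = Real.exp (t * m) * (1 - m + m * Real.exp (-t)) := by
        rw [integral_const_mul]
        congr 1
        have heq : (fun a => 1 - X a + X a * Real.exp (-t))
            = fun a => 1 + (Real.exp (-t) - 1) * X a := by funext a; ring
        rw [heq, integral_add (integrable_const 1) (hXint.const_mul _), integral_const_mul,
          integral_const]
        simp only [probReal_univ, smul_eq_mul, one_mul, ← hm_def]
        ring
    _ ≤ Real.exp (t * m) * Real.exp (m * (-t) + (-t) ^ 2 / 8) := by
        have := hoeffding_core hm0 hm1 (-t)
        have h2 := (Real.exp_pos (t * m)).le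
        nlinarith
    _ = Real.exp (t ^ 2 / 8) := by
        rw [← Real.exp_add]; ring_nf

lemma pi_mgf_bound {𝒳 : Type*} [MeasurableSpace 𝒳] (P : Measure 𝒳) [IsProbabilityMeasure P]
    (n : ℕ) (hn : 0 < n) {X : 𝒳 → ℝ} (hX : Measurable X) (hb : ∀ x, X x ∈ Set.Icc (0:ℝ) 1)
    (t : ℝ) :
    ∫ d : Fin n → 𝒳, Real.exp (t * ((∫ y, X y ∂P) - (∑ i, X (d i)) / n))
        ∂(Measure.pi fun _ => P) ≤ Real.exp (t ^ 2 / (8 * n)) := by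
  letI : MeasureSpace 𝒳 := ⟨P⟩
  haveI : IsProbabilityMeasure (volume : Measure 𝒳) := ‹IsProbabilityMeasure P›
  set m : ℝ := ∫ y, X y ∂P with hm_def
  have hrw : ∀ d : Fin n → 𝒳, Real.exp (t * (m - (∑ i, X (d i)) / n))
      = ∏ i : Fin n, Real.exp ((t / n) * (m - X (d i))) := by
    intro d
    rw [← Real.exp_sum]
    congr 1
    have hn' : (n:ℝ) ≠ 0 := Nat.cast_ne_zero.2 hn.ne'
    simp only [mul_sub]
    rw [Finset.sum_sub_distrib, Finset.sum_const, Finset.card_univ, Fintype.card_fin,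
      ← Finset.mul_sum]
    push_cast
    rw [nsmul_eq_mul]
    field_simp
  simp_rw [hrw]
  have hvol : (Measure.pi fun _ : Fin n => P) = (volume : Measure (Fin n → 𝒳)) :=
    (MeasureTheory.volume_pi).symm
  rw [hvol]
  rw [MeasureTheory.volume_pi, MeasureTheory.integral_fintype_prod_eq_prod
    (fun _ x => Real.exp ((t / n) * (m - X x)))]
  have hstep : ∫ x, Real.exp ((t / n) * (m - X x)) ∂(volume : Measure 𝒳)
      ≤ Real.exp ((t / n) ^ 2 / 8) := mgf_bound P hX hb (t / n)
  calc ∏ _i : Fin n, ∫ x, Real.exp ((t / n) * (m - X x)) ∂(volume : Measure 𝒳)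
      = (∫ x, Real.exp ((t / n) * (m - X x)) ∂(volume : Measure 𝒳)) ^ n := by
        rw [Finset.prod_const, Finset.card_univ, Fintype.card_fin]
    _ ≤ (Real.exp ((t / n) ^ 2 / 8)) ^ n := by
        apply pow_le_pow_left₀ (integral_nonneg fun x => (Real.exp_pos _).le) hstep
    _ = Real.exp (t ^ 2 / (8 * n)) := by
        rw [← Real.exp_nat_mul]
        congr 1
        have hn' : (n:ℝ) ≠ 0 := Nat.cast_ne_zero.2 hn.ne'
        field_simp


lemma klReal_nonneg {α : Type*} [MeasurableSpace α] (μ ν : Measure α)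
    [IsProbabilityMeasure μ] [IsProbabilityMeasure ν]
    (hμν : μ ≪ ν) (hint : Integrable (llr μ ν) μ) : 0 ≤ ∫ x, llr μ ν x ∂μ := by
  have hkey : ∀ᵐ x ∂μ, -llr μ ν x ≤ (ν.rnDeriv μ x).toReal - 1 := by
    filter_upwards [exp_neg_llr hμν] with x hx
    have h1 : -llr μ ν x + 1 ≤ Real.exp (-llr μ ν x) := Real.add_one_le_exp _
    rw [hx] at h1
    linarith
  have hint2 : Integrable (fun x => (ν.rnDeriv μ x).toReal - 1) μ :=
    (Measure.integrable_toReal_rnDeriv).sub (integrable_const 1)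
  have h2 : ∫ x, -llr μ ν x ∂μ ≤ ∫ x, ((ν.rnDeriv μ x).toReal - 1) ∂μ :=
    integral_mono_ae hint.neg hint2 hkey
  rw [integral_neg] at h2
  have h3 : ∫ x, ((ν.rnDeriv μ x).toReal - 1) ∂μ
      = (∫ x, (ν.rnDeriv μ x).toReal ∂μ) - 1 := by
    rw [integral_sub Measure.integrable_toReal_rnDeriv (integrable_const 1)]
    simp
  have h4 : ∫ x, (ν.rnDeriv μ x).toReal ∂μ ≤ 1 := by
    have := Measure.setIntegral_toReal_rnDeriv_le (μ := ν) (ν := μ)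
      (s := Set.univ) (measure_ne_top ν Set.univ)
    rw [setIntegral_univ] at this
    simpa using this
  linarith

/-- Donsker–Varadhan inequality for bounded measurable functions. -/
lemma dv_bound {α : Type*} [MeasurableSpace α] (μ ν : Measure α)
    [IsProbabilityMeasure μ] [IsProbabilityMeasure ν]
    (hμν : μ ≪ ν) (hint : Integrable (llr μ ν) μ)
    {φ : α → ℝ} (hφ : Measurable φ) {C : ℝ} (hbdd : ∀ x, |φ x| ≤ C) :
    ∫ x, φ x ∂μ ≤ (∫ x, llr μ ν x ∂μ) + Real.log (∫ x, Real.exp (φ x) ∂ν) := by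
  have hφμ : Integrable φ μ := bdd_integrable' hφ.aestronglyMeasurable hbdd
  have hexpν : Integrable (fun x => Real.exp (φ x)) ν := by
    refine bdd_integrable' hφ.exp.aestronglyMeasurable (C := Real.exp C) (fun x => ?_)
    rw [abs_of_pos (Real.exp_pos _)]
    exact Real.exp_le_exp.2 ((le_abs_self _).trans (hbdd x))
  haveI : NeZero ν := ⟨IsProbabilityMeasure.ne_zero ν⟩
  haveI : IsProbabilityMeasure (ν.tilted φ) := isProbabilityMeasure_tilted hexpν
  have hac : μ ≪ ν.tilted φ := hμν.trans (absolutelyContinuous_tilted hexpν)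
  have h1 : ∫ x, llr μ (ν.tilted φ) x ∂μ
      = ∫ x, llr μ ν x ∂μ - ∫ x, φ x ∂μ + Real.log (∫ x, Real.exp (φ x) ∂ν) :=
    integral_llr_tilted_right hμν hφμ hexpν hint
  have h2 : 0 ≤ ∫ x, llr μ (ν.tilted φ) x ∂μ :=
    klReal_nonneg μ (ν.tilted φ) hac (integrable_llr_tilted_right hμν hφμ hint hexpν)
  linarith

lemma map_eval_pi {ι : Type*} [Fintype ι] [DecidableEq ι] {𝒳 : Type*} [MeasurableSpace 𝒳]
    (P : Measure 𝒳) [IsProbabilityMeasure P] (i : ι) :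
    (Measure.pi fun _ : ι => P).map (Function.eval i) = P := by
  ext s hs
  rw [Measure.map_apply (measurable_pi_apply i) hs]
  rw [Set.eval_preimage, Measure.pi_pi]
  rw [Finset.prod_eq_single i (fun j _ hj => by simp [Function.update_of_ne hj])
    (fun h => absurd (Finset.mem_univ i) h)]
  simp
end AuxTopDown

/-- **Proposition 1, top-down bound.** With an abstraction map `κ : Θ → K`,
a realization map `g : K → Θ` with `κ (g K) = K`, distortion
`δ_P(g, κ) = ⨆ θ, (L_P(g(κ θ)) − L_P θ)`, population minimizer `θ*`, and an empirical
minimizer `K̂` over knowledge states, the realized heuristic `θ̂_TD = g(K̂)` satisfies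
`E[L_P(θ̂_TD)] − L_P* ≤ δ_P(g, κ) + √(I(K̂; D)/(2n))`. -/
theorem topDown_excess_risk_le
    {Ω 𝒳 Θ 𝒦 : Type*} [MeasurableSpace Ω] [MeasurableSpace 𝒳] [MeasurableSpace Θ]
    [MeasurableSpace 𝒦]
    (μ : Measure Ω) [IsProbabilityMeasure μ]
    (P : Measure 𝒳) [IsProbabilityMeasure P]
    (n : ℕ) (hn : 0 < n)
    (ℓ : Θ → 𝒳 → ℝ) (hℓ : Measurable (Function.uncurry ℓ))
    (hbound : ∀ θ : Θ, ∀ᵐ x ∂P, ℓ θ x ∈ Set.Icc (0 : ℝ) 1)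
    (D : Ω → Fin n → 𝒳) (hD : Measurable D)
    (hDlaw : μ.map D = Measure.pi fun _ : Fin n => P)
    (κ : Θ → 𝒦) (g : 𝒦 → Θ) (hg : Measurable g)
    (hκg : ∀ K : 𝒦, κ (g K) = K)
    (θstar : Θ) (hθstar : ∀ θ : Θ, (∫ x, ℓ θstar x ∂P) ≤ ∫ x, ℓ θ x ∂P)
    (Khat : Ω → 𝒦) (hKhat : Measurable Khat)
    (hmin : ∀ ω : Ω, ∀ K : 𝒦,
      (∑ i, ℓ (g (Khat ω)) (D ω i)) / n ≤ (∑ i, ℓ (g K) (D ω i)) / n) :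
    ENNReal.ofReal
        ((∫ ω, ∫ x, ℓ (g (Khat ω)) x ∂P ∂μ) - ∫ x, ℓ θstar x ∂P)
      ≤ ENNReal.ofReal (⨆ θ : Θ, ((∫ x, ℓ (g (κ θ)) x ∂P) - ∫ x, ℓ θ x ∂P))
        + (mutualInfo μ Khat D / (2 * n)) ^ (1/2 : ℝ) := by
  classical
  have hn' : (n:ℝ) ≠ 0 := Nat.cast_ne_zero.2 hn.ne'
  -- clipped loss
  set ℓc : Θ → 𝒳 → ℝ := fun θ x => max 0 (min 1 (ℓ θ x)) with hℓc_def
  have hℓc_meas : Measurable (Function.uncurry ℓc) :=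
    measurable_const.max (measurable_const.min hℓ)
  have hℓc_mem : ∀ θ x, ℓc θ x ∈ Set.Icc (0:ℝ) 1 := fun θ x =>
    ⟨le_max_left _ _, max_le (by norm_num) (min_le_left _ _)⟩
  have hℓc_ae : ∀ θ, ℓc θ =ᵐ[P] ℓ θ := by
    intro θ
    filter_upwards [hbound θ] with x hx
    show max 0 (min 1 (ℓ θ x)) = ℓ θ x
    rw [min_eq_right hx.2, max_eq_right hx.1]
  have hint_eq : ∀ θ, ∫ x, ℓc θ x ∂P = ∫ x, ℓ θ x ∂P := fun θ =>
    integral_congr_ae (hℓc_ae θ)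
  have hℓc_meas1 : ∀ θ, Measurable (ℓc θ) := fun θ => hℓc_meas.of_uncurry_left
  have hℓc_abs : ∀ θ x, |ℓc θ x| ≤ 1 := fun θ x =>
    abs_le.2 ⟨by linarith [(hℓc_mem θ x).1], (hℓc_mem θ x).2⟩
  -- population risk through realization
  set m : 𝒦 → ℝ := fun K => ∫ x, ℓc (g K) x ∂P with hm_def
  have hm_meas : Measurable m := by
    have h1 : StronglyMeasurable (fun θ => ∫ x, (Function.uncurry ℓc) (θ, x) ∂P) :=
      hℓc_meas.stronglyMeasurable.integral_prod_right'
    exact h1.measurable.comp hg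
  have hLpc_mem : ∀ θ, (∫ x, ℓc θ x ∂P) ∈ Set.Icc (0:ℝ) 1 := by
    intro θ
    constructor
    · exact integral_nonneg fun x => (hℓc_mem _ x).1
    · calc (∫ x, ℓc θ x ∂P) ≤ ∫ _, (1:ℝ) ∂P :=
          integral_mono (bdd_integrable' (hℓc_meas1 _).aestronglyMeasurable (hℓc_abs _))
            (integrable_const 1) (fun x => (hℓc_mem _ x).2)
      _ = 1 := by simp
  have hm_mem : ∀ K, m K ∈ Set.Icc (0:ℝ) 1 := fun K => hLpc_mem (g K)
  -- empirical risk
  set Emp : 𝒦 → (Fin n → 𝒳) → ℝ := fun K d => (∑ i, ℓc (g K) (d i)) / n with hEmp_def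
  have hEmp_meas : Measurable (fun p : 𝒦 × (Fin n → 𝒳) => Emp p.1 p.2) := by
    apply Measurable.div_const
    apply Finset.measurable_sum
    intro i _
    exact hℓc_meas.comp
      ((hg.comp measurable_fst).prodMk ((measurable_pi_apply i).comp measurable_snd))
  have hEmp_mem : ∀ K d, Emp K d ∈ Set.Icc (0:ℝ) 1 := by
    intro K d
    constructor
    · exact div_nonneg (Finset.sum_nonneg fun i _ => (hℓc_mem _ _).1) (Nat.cast_nonneg n)
    · rw [div_le_one (by exact_mod_cast hn)]
      calc ∑ i, ℓc (g K) (d i) ≤ ∑ _i : Fin n, (1:ℝ) :=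
          Finset.sum_le_sum fun i _ => (hℓc_mem _ _).2
      _ = n := by simp
  set G : (𝒦 × (Fin n → 𝒳)) → ℝ := fun p => m p.1 - Emp p.1 p.2 with hG_def
  have hG_meas : Measurable G := (hm_meas.comp measurable_fst).sub hEmp_meas
  have hG_abs : ∀ p, |G p| ≤ 1 := by
    intro p
    show |m p.1 - Emp p.1 p.2| ≤ 1
    exact abs_le.2
      ⟨by linarith [(hm_mem p.1).1, (hEmp_mem p.1 p.2).2],
       by linarith [(hm_mem p.1).2, (hEmp_mem p.1 p.2).1]⟩
  -- measures
  set ν : Measure (Fin n → 𝒳) := Measure.pi fun _ => P with hν_def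
  set π : Measure 𝒦 := μ.map Khat with hπ_def
  set J : Measure (𝒦 × (Fin n → 𝒳)) := μ.map fun ω => (Khat ω, D ω) with hJ_def
  have hpair_meas : Measurable fun ω => (Khat ω, D ω) := hKhat.prodMk hD
  haveI : IsProbabilityMeasure J := Measure.isProbabilityMeasure_map hpair_meas.aemeasurable
  haveI : IsProbabilityMeasure π := Measure.isProbabilityMeasure_map hKhat.aemeasurable
  set Q : Measure (𝒦 × (Fin n → 𝒳)) := π.prod ν with hQ_def
  haveI : IsProbabilityMeasure Q := by rw [hQ_def]; infer_instance
  have hMI : mutualInfo μ Khat D = klDiv J Q := by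
    rw [mutualInfo, hQ_def, hπ_def, hJ_def, hDlaw, hν_def]
  -- distortion bound
  set δ : ℝ := ⨆ θ : Θ, ((∫ x, ℓ (g (κ θ)) x ∂P) - ∫ x, ℓ θ x ∂P) with hδ_def
  have hLp_mem : ∀ θ, (∫ x, ℓ θ x ∂P) ∈ Set.Icc (0:ℝ) 1 := fun θ =>
    hint_eq θ ▸ hLpc_mem θ
  have hδ_ge : (∫ x, ℓ (g (κ θstar)) x ∂P) - ∫ x, ℓ θstar x ∂P ≤ δ := by
    apply le_ciSup (f := fun θ : Θ => ((∫ x, ℓ (g (κ θ)) x ∂P) - ∫ x, ℓ θ x ∂P))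
    refine ⟨1, ?_⟩
    rintro y ⟨θ, rfl⟩
    have h1 := hLp_mem (g (κ θ))
    have h2 := hLp_mem θ
    simp only []
    linarith [h1.2, h2.1]
  have hLHS : (∫ ω, ∫ x, ℓ (g (Khat ω)) x ∂P ∂μ) = ∫ ω, m (Khat ω) ∂μ :=
    integral_congr_ae (Filter.Eventually.of_forall fun ω => (hint_eq (g (Khat ω))).symm)
  -- coordinate-wise a.e. facts
  have factA : ∀ θ, ∀ᵐ d ∂ν, ∀ i, ℓc θ (d i) = ℓ θ (d i) := by
    intro θ
    rw [ae_all_iff]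
    intro i
    have hP : P {x | ¬ ℓc θ x = ℓ θ x} = 0 := hℓc_ae θ
    have h2 := Measure.pi_eval_preimage_null (μ := fun _ : Fin n => P) (i := i) hP
    rw [ae_iff]
    exact h2
  by_cases hcase : J ≪ Q ∧ Integrable (llr J Q) J
  case neg =>
    have htop : klDiv J Q = ⊤ := by rw [klDiv, if_neg hcase]
    rw [hMI, htop]
    have h2ntop : ((2:ℝ≥0∞) * n) ≠ ⊤ := by
      exact ENNReal.mul_ne_top ENNReal.ofNat_ne_top (ENNReal.natCast_ne_top n)
    rw [ENNReal.top_div_of_ne_top h2ntop, ENNReal.top_rpow_of_pos (by norm_num)]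
    simp
  case pos =>
    obtain ⟨hac, hllr⟩ := hcase
    set KL : ℝ := ∫ p, llr J Q p ∂J with hKL_def
    have hKL0 : 0 ≤ KL := klReal_nonneg J Q hac hllr
    -- a.e. equality of clipped and true loss at the data
    have factQ : ∀ᵐ p : 𝒦 × (Fin n → 𝒳) ∂Q, ∀ i, ℓc (g p.1) (p.2 i) = ℓ (g p.1) (p.2 i) := by
      rw [ae_iff]
      have hBmeas : MeasurableSet {p : 𝒦 × (Fin n → 𝒳) |
          ¬ ∀ i, ℓc (g p.1) (p.2 i) = ℓ (g p.1) (p.2 i)} := by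
        have hgood : MeasurableSet {p : 𝒦 × (Fin n → 𝒳) |
            ∀ i, ℓc (g p.1) (p.2 i) = ℓ (g p.1) (p.2 i)} := by
          have heq : {p : 𝒦 × (Fin n → 𝒳) | ∀ i, ℓc (g p.1) (p.2 i) = ℓ (g p.1) (p.2 i)}
              = ⋂ i, {p : 𝒦 × (Fin n → 𝒳) | ℓc (g p.1) (p.2 i) = ℓ (g p.1) (p.2 i)} := by
            ext p; simp
          rw [heq]
          apply MeasurableSet.iInter
          intro i
          have hf : Measurable fun p : 𝒦 × (Fin n → 𝒳) => ℓc (g p.1) (p.2 i) :=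
          hℓc_meas.comp
            ((hg.comp measurable_fst).prodMk ((measurable_pi_apply i).comp measurable_snd))
          have hh : Measurable fun p : 𝒦 × (Fin n → 𝒳) => ℓ (g p.1) (p.2 i) :=
            hℓ.comp
              ((hg.comp measurable_fst).prodMk ((measurable_pi_apply i).comp measurable_snd))
          exact measurableSet_eq_fun hf hh
        simpa [Set.compl_setOf] using hgood.compl
      rw [hQ_def, Measure.measure_prod_null hBmeas]
      refine Filter.Eventually.of_forall fun K => ?_
      have := factA (g K)
      rw [ae_iff] at this
      exact this
    have factJ : ∀ᵐ p : 𝒦 × (Fin n → 𝒳) ∂J, ∀ i, ℓc (g p.1) (p.2 i) = ℓ (g p.1) (p.2 i) :=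
      hac.ae_le factQ
    have factμ : ∀ᵐ ω ∂μ, ∀ i, ℓc (g (Khat ω)) (D ω i) = ℓ (g (Khat ω)) (D ω i) :=
      ae_of_ae_map hpair_meas.aemeasurable factJ
    have factμ' : ∀ᵐ ω ∂μ, ∀ i, ℓc (g (κ θstar)) (D ω i) = ℓ (g (κ θstar)) (D ω i) := by
      have h := factA (g (κ θstar))
      rw [← hDlaw] at h
      exact ae_of_ae_map hD.aemeasurable h
    have hmin_ae : ∀ᵐ ω ∂μ, Emp (Khat ω) (D ω) ≤ Emp (κ θstar) (D ω) := by
      filter_upwards [factμ, factμ'] with ω h1 h2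
      have e1 : Emp (Khat ω) (D ω) = (∑ i, ℓ (g (Khat ω)) (D ω i)) / n := by
        show (∑ i, ℓc (g (Khat ω)) (D ω i)) / (n:ℝ) = _
        congr 1
        exact Finset.sum_congr rfl fun i _ => h1 i
      have e2 : Emp (κ θstar) (D ω) = (∑ i, ℓ (g (κ θstar)) (D ω i)) / n := by
        show (∑ i, ℓc (g (κ θstar)) (D ω i)) / (n:ℝ) = _
        congr 1
        exact Finset.sum_congr rfl fun i _ => h2 i
      rw [e1, e2]
      exact hmin ω (κ θstar)
    -- integrability over μ
    have hGpair_int : Integrable (fun ω => G (Khat ω, D ω)) μ :=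
      bdd_integrable' ((hG_meas.comp hpair_meas).aestronglyMeasurable)
        (fun ω => hG_abs _)
    have hEmpKhat_int : Integrable (fun ω => Emp (Khat ω) (D ω)) μ :=
      bdd_integrable' ((hEmp_meas.comp hpair_meas).aestronglyMeasurable)
        (C := 1) (fun ω => abs_le.2 ⟨by linarith [(hEmp_mem (Khat ω) (D ω)).1],
          (hEmp_mem (Khat ω) (D ω)).2⟩)
    have hEmpstar_int : Integrable (fun ω => Emp (κ θstar) (D ω)) μ :=
      bdd_integrable' ((hEmp_meas.comp (measurable_const.prodMk hD)).aestronglyMeasurable)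
        (C := 1) (fun ω => abs_le.2 ⟨by linarith [(hEmp_mem (κ θstar) (D ω)).1],
          (hEmp_mem (κ θstar) (D ω)).2⟩)
    -- decomposition
    have step1 : ∫ ω, m (Khat ω) ∂μ = (∫ p, G p ∂J) + ∫ ω, Emp (Khat ω) (D ω) ∂μ := by
      have h2 : ∫ p, G p ∂J = ∫ ω, G (Khat ω, D ω) ∂μ := by
        rw [hJ_def]
        exact integral_map hpair_meas.aemeasurable hG_meas.aestronglyMeasurable
      have h3 : (fun ω => m (Khat ω)) = fun ω => G (Khat ω, D ω) + Emp (Khat ω) (D ω) := by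
        funext ω
        simp [hG_def]
      rw [h3, integral_add hGpair_int hEmpKhat_int, h2]
    have step2 : ∫ ω, Emp (Khat ω) (D ω) ∂μ ≤ ∫ ω, Emp (κ θstar) (D ω) ∂μ :=
      integral_mono_ae hEmpKhat_int hEmpstar_int hmin_ae
    have step3 : ∫ ω, Emp (κ θstar) (D ω) ∂μ = ∫ x, ℓ (g (κ θstar)) x ∂P := by
      have h1 : ∫ ω, Emp (κ θstar) (D ω) ∂μ = ∫ d, Emp (κ θstar) d ∂ν := by
        rw [← hDlaw]
        exact (integral_map hD.aemeasurable
          (hEmp_meas.comp (measurable_const.prodMk measurable_id)).aestronglyMeasurable).symm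
      rw [h1]
      have hcoord : ∀ i : Fin n, ∫ d : Fin n → 𝒳, ℓc (g (κ θstar)) (d i) ∂ν
          = ∫ x, ℓc (g (κ θstar)) x ∂P := by
        intro i
        calc ∫ d : Fin n → 𝒳, ℓc (g (κ θstar)) (d i) ∂ν
            = ∫ x, ℓc (g (κ θstar)) x ∂(ν.map (Function.eval i)) :=
              (integral_map (measurable_pi_apply i).aemeasurable
                (hℓc_meas1 _).aestronglyMeasurable).symm
        _ = ∫ x, ℓc (g (κ θstar)) x ∂P := by rw [hν_def, map_eval_pi]
      have h2 : ∫ d, Emp (κ θstar) d ∂ν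
          = (∑ i : Fin n, ∫ d : Fin n → 𝒳, ℓc (g (κ θstar)) (d i) ∂ν) / n := by
        rw [hEmp_def]
        simp only []
        rw [integral_div, integral_finset_sum]
        intro i _
        exact bdd_integrable'
          ((hℓc_meas1 _).comp (measurable_pi_apply i)).aestronglyMeasurable
          (fun d => hℓc_abs _ _)
      rw [h2]
      simp_rw [hcoord]
      rw [Finset.sum_const, Finset.card_univ, Fintype.card_fin, nsmul_eq_mul]
      rw [mul_div_cancel_left₀ _ hn']
      exact hint_eq _
    have hmain : ∫ ω, m (Khat ω) ∂μ - ∫ x, ℓ θstar x ∂P ≤ δ + ∫ p, G p ∂J := by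
      have := hδ_ge
      linarith [step1, step2, step3]
    -- Donsker–Varadhan bound on the generalization gap
    have hDV : ∀ t : ℝ, 0 < t → ∫ p, G p ∂J ≤ KL / t + t / (8 * n) := by
      intro t ht
      have hφbdd : ∀ p, |t * G p| ≤ t := fun p => by
        rw [abs_mul, abs_of_pos ht]
        calc t * |G p| ≤ t * 1 := by
              exact mul_le_mul_of_nonneg_left (hG_abs p) ht.le
        _ = t := mul_one t
      have h1 := dv_bound J Q hac hllr (hG_meas.const_mul t) hφbdd
      have hintQ : Integrable (fun p => Real.exp (t * G p)) Q :=
        bdd_integrable' (hG_meas.const_mul t).exp.aestronglyMeasurable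
          (C := Real.exp t) (fun p => by
            rw [abs_of_pos (Real.exp_pos _)]
            exact Real.exp_le_exp.2 ((le_abs_self _).trans (hφbdd p)))
      have hin : ∀ K, ∫ d, Real.exp (t * G (K, d)) ∂ν ≤ Real.exp (t^2/(8*n)) := by
        intro K
        have := pi_mgf_bound P n hn (hℓc_meas1 (g K)) (fun x => hℓc_mem _ x) t
        rw [hν_def]
        exact this
      have h2 : ∫ p, Real.exp (t * G p) ∂Q ≤ Real.exp (t^2 / (8*n)) := by
        rw [hQ_def] at hintQ ⊢
        rw [MeasureTheory.integral_prod _ hintQ]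
        calc ∫ K, (∫ d, Real.exp (t * G (K, d)) ∂ν) ∂π
            ≤ ∫ _K, Real.exp (t^2/(8*n)) ∂π :=
              integral_mono hintQ.integral_prod_left (integrable_const _) hin
        _ = Real.exp (t^2/(8*n)) := by simp
      have h3 : Real.log (∫ p, Real.exp (t * G p) ∂Q) ≤ t^2/(8*n) := by
        calc Real.log (∫ p, Real.exp (t * G p) ∂Q)
            ≤ Real.log (Real.exp (t^2/(8*n))) :=
              Real.log_le_log (integral_exp_pos hintQ) h2
        _ = t^2/(8*n) := Real.log_exp _
      have h4 : t * ∫ p, G p ∂J ≤ KL + t^2/(8*n) := by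
        rw [← integral_const_mul]
        calc ∫ p, t * G p ∂J ≤ KL + Real.log (∫ p, Real.exp (t * G p) ∂Q) := h1
        _ ≤ KL + t^2/(8*n) := by linarith [h3]
      rw [← mul_le_mul_iff_right₀ ht]
      calc t * ∫ p, G p ∂J ≤ KL + t^2/(8*n) := h4
      _ = t * (KL/t + t/(8*n)) := by field_simp
    have hGbound : ∫ p, G p ∂J ≤ Real.sqrt (KL / (2 * n)) := by
      rcases eq_or_lt_of_le hKL0 with h0 | h0
      · have hle0 : ∫ p, G p ∂J ≤ 0 := by
          apply le_of_forall_pos_le_add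
          intro ε hε
          have := hDV (8*n*ε) (by positivity)
          rw [← h0] at this
          calc ∫ p, G p ∂J ≤ 0 / (8*n*ε) + (8*n*ε) / (8*n) := this
          _ = ε := by field_simp; ring
          _ = 0 + ε := by ring
        exact hle0.trans (Real.sqrt_nonneg _)
      · set t : ℝ := Real.sqrt (8 * n * KL) with ht_def
        have ht : 0 < t := Real.sqrt_pos.2 (by positivity)
        have ht2 : t^2 = 8*n*KL := Real.sq_sqrt (by positivity)
        have hdv := hDV t ht
        have heq : KL/t + t/(8*n) = Real.sqrt (KL/(2*n)) := by
          have h1 : KL/(2*(n:ℝ)) = (t/(4*n))^2 := by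
            field_simp
            nlinarith [ht2]
          rw [h1, Real.sqrt_sq (by positivity)]
          have hKLt : KL = t^2/(8*n) := by
            rw [ht2]; field_simp
          rw [hKLt]
          field_simp
          ring
        linarith [hdv, heq]
    -- conclusion
    have real_ineq : (∫ ω, ∫ x, ℓ (g (Khat ω)) x ∂P ∂μ) - ∫ x, ℓ θstar x ∂P
        ≤ δ + Real.sqrt (KL/(2*n)) := by
      rw [hLHS]
      linarith [hmain, hGbound]
    have hKLdiv_nonneg : (0:ℝ) ≤ KL / (2*n) := div_nonneg hKL0 (by positivity)
    calc ENNReal.ofReal ((∫ ω, ∫ x, ℓ (g (Khat ω)) x ∂P ∂μ) - ∫ x, ℓ θstar x ∂P)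
        ≤ ENNReal.ofReal (δ + Real.sqrt (KL/(2*n))) := ENNReal.ofReal_le_ofReal real_ineq
      _ ≤ ENNReal.ofReal δ + ENNReal.ofReal (Real.sqrt (KL/(2*n))) := ENNReal.ofReal_add_le
      _ ≤ ENNReal.ofReal δ + (mutualInfo μ Khat D / (2 * n)) ^ (1/2 : ℝ) := by
          gcongr
          have hMIval : mutualInfo μ Khat D = ENNReal.ofReal KL := by
            rw [hMI, klDiv, if_pos ⟨hac, hllr⟩]
          rw [hMIval]
          have h2n : (2:ℝ≥0∞) * n = ENNReal.ofReal (2*n) := by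
            rw [ENNReal.ofReal_mul (by norm_num)]
            rw [ENNReal.ofReal_natCast, ENNReal.ofReal_ofNat]
          rw [h2n, ← ENNReal.ofReal_div_of_pos (by positivity)]
          rw [ENNReal.ofReal_rpow_of_nonneg hKLdiv_nonneg (by norm_num)]
          apply ENNReal.ofReal_le_ofReal
          rw [Real.sqrt_eq_rpow]
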